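/- Let R be a commutative ring, equip the free algebra R⟨X₁,…,Xₙ⟩ with a weight ℕ-gradation determined by positive integer degrees deg Xᵢ = nᵢ, let ≺ be an ℕ-graded monomial ordering on the standard monomial basis B, and let G be a monic Gröbner basis of the ideal I = ⟨G⟩. If the monomial algebra R⟨X₁,…,Xₙ⟩/⟨LM(G)⟩ is left Artinian (Artinian as a left module over itself), then both R⟨X₁,…,Xₙ⟩/⟨LH(G)⟩ and A = R⟨X₁,…,Xₙ⟩/I are left Artinian. -/

import Mathlib

noncomputable section
open MonoidAlgebra
open scoped Classical

/-- Words in the alphabet `X_1, ..., X_n`: the standard monomial basis `B`. -/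
abbrev Word (n : ℕ) : Type := FreeMonoid (Fin n)

/-- The free `R`-algebra `R⟨X_1, ..., X_n⟩`, realized as the monoid algebra of the
free monoid on `n` letters over `R`. -/
abbrev FreeAlg (R : Type) [CommRing R] (n : ℕ) : Type := MonoidAlgebra R (Word n)

variable {R : Type} [CommRing R] {n : ℕ}

/-- The monomial (word) `w` viewed as an element of the free algebra. -/
def mono (R : Type) [CommRing R] {n : ℕ} (w : Word n) : FreeAlg R n :=
  MonoidAlgebra.of R (Word n) w

/-- A monomial ordering: a well-ordering on words compatible with two-sided multiplication. -/
def IsMonomialOrder (n : ℕ) [LinearOrder (Word n)] : Prop :=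
  WellFoundedLT (Word n) ∧ ∀ w u v s : Word n, u < v → w * u * s < w * v * s

/-- The leading monomial of `f` (with junk value `1` for `f = 0`). -/
def LMon [LinearOrder (Word n)] (f : FreeAlg R n) : Word n :=
  if h : f = 0 then 1 else f.coeff.support.max'
    (Finsupp.support_nonempty_iff.mpr (fun h' => h (MonoidAlgebra.coeff_eq_zero.mp h')))

/-- The leading coefficient of `f`. -/
def LCoef [LinearOrder (Word n)] (f : FreeAlg R n) : R := f.coeff (LMon f)

/-- `f` is monic: it is nonzero and its leading coefficient is `1`. -/
def IsMonic [LinearOrder (Word n)] (f : FreeAlg R n) : Prop := f ≠ 0 ∧ LCoef f = 1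

/-- `v` divides `u` as words: `u = w * v * s` for some words `w, s`. -/
def MDvd {n : ℕ} (v u : Word n) : Prop := ∃ w s : Word n, u = w * v * s

/-- `G` is a monic Gröbner basis of the two-sided ideal `I`: every element of `G` is monic,
and the leading monomial of every nonzero element of `I` is divisible by the leading
monomial of some element of `G`. -/
def IsMonicGB [LinearOrder (Word n)] (G : Set (FreeAlg R n))
    (I : TwoSidedIdeal (FreeAlg R n)) : Prop :=
  (∀ g ∈ G, IsMonic g) ∧ ∀ f ∈ I, f ≠ 0 → ∃ g ∈ G, MDvd (LMon g) (LMon f)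

/-- The set `LM(S)` of leading monomials of the nonzero elements of `S`. -/
def LMset [LinearOrder (Word n)] (S : Set (FreeAlg R n)) : Set (Word n) :=
  {w | ∃ f ∈ S, f ≠ 0 ∧ LMon f = w}

/-- The weight degree of a word, for the weights `deg Xᵢ = d i`. -/
def wdeg {n : ℕ} (d : Fin n → ℕ) (w : Word n) : ℕ := ((FreeMonoid.toList w).map d).sum

/-- The maximal weight degree occurring in `f`. -/
def maxdeg (d : Fin n → ℕ) (f : FreeAlg R n) : ℕ := f.coeff.support.sup (wdeg d)

/-- The ℕ-leading homogeneous element `LH(f)` of `f`: the sum of the terms of `f` of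
maximal weight degree. -/
def LH (d : Fin n → ℕ) (f : FreeAlg R n) : FreeAlg R n :=
  ∑ w ∈ f.coeff.support.filter (fun w => wdeg d w = maxdeg d f), MonoidAlgebra.single w (f.coeff w)

/-- The set `LH(S)` of leading homogeneous elements of the nonzero elements of `S`. -/
def LHset (d : Fin n → ℕ) (S : Set (FreeAlg R n)) : Set (FreeAlg R n) :=
  {x | ∃ f ∈ S, f ≠ 0 ∧ x = LH d f}

/-- An ℕ-graded monomial ordering with respect to the weights `d`: a monomial ordering
such that words of smaller degree are smaller. -/
def IsGradedMonomialOrder {n : ℕ} (d : Fin n → ℕ) [LinearOrder (Word n)] : Prop :=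
  IsMonomialOrder n ∧ ∀ u v : Word n, wdeg d u < wdeg d v → u < v

/-- The quotient ring of the free algebra by a two-sided ideal. -/
abbrev QuotRing (I : TwoSidedIdeal (FreeAlg R n)) : Type := I.ringCon.Quotient
set_option linter.unusedSectionVars false
set_option linter.unusedVariables false
section Basic
variable [LinearOrder (Word n)]

lemma lmon_mem_support {f : FreeAlg R n} (hf : f ≠ 0) : LMon f ∈ f.coeff.support := by
  rw [LMon, dif_neg hf]; exact Finset.max'_mem _ _

lemma lcoef_ne_zero {f : FreeAlg R n} (hf : f ≠ 0) : f.coeff (LMon f) ≠ 0 :=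
  Finsupp.mem_support_iff.mp (lmon_mem_support hf)

lemma le_lmon {f : FreeAlg R n} (hf : f ≠ 0) {u : Word n} (hu : u ∈ f.coeff.support) :
    u ≤ LMon f := by
  rw [LMon, dif_neg hf]; exact Finset.le_max' _ _ hu

lemma lmon_eq_of {f : FreeAlg R n} {w : Word n} (h1 : f.coeff w ≠ 0)
    (h2 : ∀ u ∈ f.coeff.support, u ≤ w) : LMon f = w := by
  have hf : f ≠ 0 := fun h => h1 (by simp [h])
  exact le_antisymm (h2 _ (lmon_mem_support hf)) (le_lmon hf (Finsupp.mem_support_iff.mpr h1))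

lemma conj_inj (p q : Word n) : Function.Injective (fun m : Word n => p * m * q) :=
  fun a b h => mul_left_cancel (mul_right_cancel h)

lemma mono_mul_mul_mono (p q : Word n) (f : FreeAlg R n) :
    (mono R p * f * mono R q).coeff = Finsupp.mapDomain (fun m => p * m * q) f.coeff := by
  induction f using MonoidAlgebra.induction_linear with
  | zero => simp
  | add x y hx hy =>
    rw [mul_add, add_mul, MonoidAlgebra.coeff_add, hx, hy, MonoidAlgebra.coeff_add,
      Finsupp.mapDomain_add]
  | single a b =>
    rw [mono, mono, MonoidAlgebra.of_apply, MonoidAlgebra.of_apply,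
      MonoidAlgebra.single_mul_single, MonoidAlgebra.single_mul_single, one_mul, mul_one,
      MonoidAlgebra.coeff_single, MonoidAlgebra.coeff_single, Finsupp.mapDomain_single]

lemma conj_apply (p q : Word n) (f : FreeAlg R n) (m : Word n) :
    (mono R p * f * mono R q).coeff (p * m * q) = f.coeff m := by
  rw [mono_mul_mul_mono, Finsupp.mapDomain_apply (conj_inj p q)]

lemma conj_support (p q : Word n) (f : FreeAlg R n) :
    (mono R p * f * mono R q).coeff.support = f.coeff.support.image (fun m => p * m * q) := by
  rw [mono_mul_mul_mono, Finsupp.mapDomain_support_of_injective (conj_inj p q)]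

end Basic
section Order
variable [LinearOrder (Word n)]

lemma conj_le (hord : IsMonomialOrder n) {u v : Word n} (p q : Word n) (h : u ≤ v) :
    p * u * q ≤ p * v * q :=
  h.lt_or_eq.elim (fun h' => (hord.2 p u v q h').le) (fun h' => by rw [h'])

lemma lmon_conj (hord : IsMonomialOrder n) (p q : Word n) {f : FreeAlg R n} (hf : f ≠ 0) :
    LMon (mono R p * f * mono R q) = p * LMon f * q := by
  apply lmon_eq_of
  · rw [conj_apply]; exact lcoef_ne_zero hf
  · intro u hu
    rw [conj_support] at hu
    obtain ⟨m, hm, rfl⟩ := Finset.mem_image.mp hu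
    exact conj_le hord p q (le_lmon hf hm)

lemma mdvd_of_mem_monomial_span {V : Set (Word n)} {f : FreeAlg R n}
    (hf : f ∈ TwoSidedIdeal.span (mono R '' V)) {w : Word n} (hw : f.coeff w ≠ 0) :
    ∃ v ∈ V, MDvd v w := by
  have key : ∀ x y : FreeAlg R n,
      (∀ w, y.coeff w ≠ 0 → ∃ v ∈ V, MDvd v w) → ∀ w, (x * y).coeff w ≠ 0 → ∃ v ∈ V, MDvd v w := by
    intro x y hy w hxy
    rw [MonoidAlgebra.coeff_mul] at hxy
    obtain ⟨a₁, ha₁, h1⟩ := Finset.exists_ne_zero_of_sum_ne_zero hxy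
    obtain ⟨a₂, ha₂, h2⟩ := Finset.exists_ne_zero_of_sum_ne_zero h1
    dsimp only at h2
    have hw' : a₁ * a₂ = w := by by_contra hne; rw [if_neg hne] at h2; exact h2 rfl
    rw [if_pos hw'] at h2
    have hy2 : y.coeff a₂ ≠ 0 := fun h0 => h2 (by rw [h0, mul_zero])
    obtain ⟨v, hv, p, s, hps⟩ := hy a₂ hy2
    exact ⟨v, hv, a₁ * p, s, by rw [← hw', hps, mul_assoc, mul_assoc, mul_assoc]⟩
  have key' : ∀ x y : FreeAlg R n,
      (∀ w, x.coeff w ≠ 0 → ∃ v ∈ V, MDvd v w) → ∀ w, (x * y).coeff w ≠ 0 → ∃ v ∈ V, MDvd v w := by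
    intro x y hx w hxy
    rw [MonoidAlgebra.coeff_mul] at hxy
    obtain ⟨a₁, ha₁, h1⟩ := Finset.exists_ne_zero_of_sum_ne_zero hxy
    obtain ⟨a₂, ha₂, h2⟩ := Finset.exists_ne_zero_of_sum_ne_zero h1
    dsimp only at h2
    have hw' : a₁ * a₂ = w := by by_contra hne; rw [if_neg hne] at h2; exact h2 rfl
    rw [if_pos hw'] at h2
    have hx1 : x.coeff a₁ ≠ 0 := fun h0 => h2 (by rw [h0, zero_mul])
    obtain ⟨v, hv, p, s, hps⟩ := hx a₁ hx1
    exact ⟨v, hv, p, s * a₂, by rw [← hw', hps]; simp only [mul_assoc]⟩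
  let D : TwoSidedIdeal (FreeAlg R n) := TwoSidedIdeal.mk'
    {x | ∀ w, x.coeff w ≠ 0 → ∃ v ∈ V, MDvd v w}
    (fun w hw => absurd rfl hw)
    (fun {x y} hx hy w hw => by
      rw [MonoidAlgebra.coeff_add, Finsupp.add_apply] at hw
      rcases ne_or_eq (x.coeff w) 0 with h | h
      · exact hx w h
      · exact hy w (fun h' => hw (by rw [h, h', add_zero])))
    (fun {x} hx w hw => hx w (fun h => hw (by rw [MonoidAlgebra.coeff_neg, Finsupp.neg_apply, h, neg_zero])))
    (fun {x y} hy => key x y hy)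
    (fun {x y} hx => key' x y hx)
  have hfD : f ∈ D := by
    refine TwoSidedIdeal.mem_span_iff.mp hf D ?_
    rintro _ ⟨v, hv, rfl⟩
    rw [SetLike.mem_coe, TwoSidedIdeal.mem_mk']
    intro w hw
    have : v = w := by
      by_contra hne
      exact hw (by rw [mono, MonoidAlgebra.of_apply, MonoidAlgebra.coeff_single, Finsupp.single_apply, if_neg hne])
    exact ⟨v, hv, 1, 1, by rw [← this, one_mul, mul_one]⟩
  rw [TwoSidedIdeal.mem_mk'] at hfD
  exact hfD w hw

lemma mono_one : mono R (1 : Word n) = 1 := rfl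

lemma mono_mul (u : Word n) (f : FreeAlg R n) :
    (mono R u * f).coeff = Finsupp.mapDomain (fun m => u * m) f.coeff := by
  have h := mono_mul_mul_mono u 1 f
  rw [mono_one, mul_one] at h
  rw [h]; congr 1; funext m; rw [mul_one]

lemma mono_mul_apply (u : Word n) (f : FreeAlg R n) (m : Word n) :
    (mono R u * f).coeff (u * m) = f.coeff m := by
  rw [mono_mul, Finsupp.mapDomain_apply (fun a b h => mul_left_cancel h)]

lemma mono_mul_support (u : Word n) (f : FreeAlg R n) :
    (mono R u * f).coeff.support = f.coeff.support.image (fun m => u * m) := by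
  rw [mono_mul, Finsupp.mapDomain_support_of_injective (fun a b h => mul_left_cancel h)]

lemma pi_eq_zero_iff (Iid : TwoSidedIdeal (FreeAlg R n)) (x : FreeAlg R n) :
    Iid.ringCon.mk' x = 0 ↔ x ∈ Iid := by
  have : (Iid.ringCon.mk' x = 0) ↔ ((x : Iid.ringCon.Quotient) = ((0 : FreeAlg R n) : Iid.ringCon.Quotient)) := Iff.rfl
  rw [this, RingCon.eq, TwoSidedIdeal.mem_iff]

end Order
section Master
variable [LinearOrder (Word n)]

lemma single_mul_eq_smul (u : Word n) (r : R) (h : FreeAlg R n) :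
    (MonoidAlgebra.single u r : FreeAlg R n) * h = r • (mono R u * h) := by
  have h1 : (MonoidAlgebra.single u r : FreeAlg R n) = r • mono R u := by
    rw [mono, MonoidAlgebra.of_apply, MonoidAlgebra.smul_single', mul_one]
  rw [h1, smul_mul_assoc]

lemma single_one_mul (c : R) (x : FreeAlg R n) :
    (MonoidAlgebra.single (1 : Word n) c : FreeAlg R n) * x = c • x := by
  rw [single_mul_eq_smul, mono_one, one_mul]

theorem master (hord : IsMonomialOrder n)
    (G : Set (FreeAlg R n)) (hmonic : ∀ g ∈ G, IsMonic g)
    (hA : IsArtinianRing (QuotRing (TwoSidedIdeal.span (mono R '' LMset G)))) :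
    IsArtinianRing (QuotRing (TwoSidedIdeal.span G)) := by
  set I : TwoSidedIdeal (FreeAlg R n) := TwoSidedIdeal.span G with hI
  set J : TwoSidedIdeal (FreeAlg R n) := TwoSidedIdeal.span (mono R '' LMset G) with hJ
  let π : FreeAlg R n →+* QuotRing I := I.ringCon.mk'
  let ρ : FreeAlg R n →+* QuotRing J := J.ringCon.mk'
  haveI hρs : RingHomSurjective ρ := ⟨fun q => Quotient.inductionOn' q fun a => ⟨a, rfl⟩⟩
  let ρsl : FreeAlg R n →ₛₗ[ρ] QuotRing J :=
    { toFun := ρ, map_add' := map_add ρ,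
      map_smul' := fun r x => by simp only [smul_eq_mul, map_mul] }
  -- the coefficient modules
  let E : Submodule (QuotRing I) (QuotRing I) → Word n → Set R := fun N w =>
    {c | ∃ h : FreeAlg R n, π h ∈ N ∧ (∀ u ∈ h.coeff.support, u ≤ w) ∧ h.coeff w = c}
  have hE0 : ∀ N w, (0 : R) ∈ E N w :=
    fun N w => ⟨0, by simpa using N.zero_mem, by simp, rfl⟩
  have hEadd : ∀ N w (c₁ c₂ : R), c₁ ∈ E N w → c₂ ∈ E N w → c₁ + c₂ ∈ E N w := by
    rintro N w c₁ c₂ ⟨h₁, hm₁, hs₁, rfl⟩ ⟨h₂, hm₂, hs₂, rfl⟩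
    refine ⟨h₁ + h₂, by rw [map_add]; exact N.add_mem hm₁ hm₂, ?_, by rw [MonoidAlgebra.coeff_add, Finsupp.add_apply]⟩
    intro u hu
    rw [MonoidAlgebra.coeff_add] at hu
    rcases Finset.mem_union.mp (Finsupp.support_add hu) with h | h
    · exact hs₁ u h
    · exact hs₂ u h
  have hEscale : ∀ N (r : R) (u y : Word n) (c : R), c ∈ E N y → r * c ∈ E N (u * y) := by
    rintro N r u y c ⟨h, hm, hs, rfl⟩
    refine ⟨MonoidAlgebra.single u r * h, ?_, ?_, ?_⟩
    · rw [map_mul, ← smul_eq_mul]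
      exact N.smul_mem (π (MonoidAlgebra.single u r)) hm
    · intro t ht
      rw [single_mul_eq_smul, MonoidAlgebra.coeff_smul] at ht
      have ht' := Finsupp.support_smul ht
      rw [mono_mul_support] at ht'
      obtain ⟨m, hm', rfl⟩ := Finset.mem_image.mp ht'
      have h2 : u * m * 1 ≤ u * y * 1 := conj_le hord u 1 (hs m hm')
      simpa [mul_one] using h2
    · rw [single_mul_eq_smul, MonoidAlgebra.coeff_smul, Finsupp.smul_apply, mono_mul_apply, smul_eq_mul]
  have hDiv : ∀ N (w : Word n), (∃ v ∈ LMset G, MDvd v w) → ∀ c : R, c ∈ E N w := by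
    rintro N w ⟨v, ⟨g, hgG, hgne, rfl⟩, p, q, rfl⟩ c
    have hgI : mono R p * g * mono R q ∈ I :=
      I.mul_mem_right _ _ (I.mul_mem_left _ _ (TwoSidedIdeal.subset_span hgG))
    refine ⟨c • (mono R p * g * mono R q), ?_, ?_, ?_⟩
    · have hmem : c • (mono R p * g * mono R q) ∈ I := by
        rw [← single_one_mul]
        exact I.mul_mem_left _ _ hgI
      have hz : π (c • (mono R p * g * mono R q)) = 0 := (pi_eq_zero_iff I _).mpr hmem
      rw [hz]; exact N.zero_mem
    · intro t ht
      rw [MonoidAlgebra.coeff_smul] at ht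
      have ht' := Finsupp.support_smul ht
      rw [conj_support] at ht'
      obtain ⟨m, hm', rfl⟩ := Finset.mem_image.mp ht'
      exact conj_le hord p q (le_lmon hgne hm')
    · rw [MonoidAlgebra.coeff_smul, Finsupp.smul_apply, conj_apply, smul_eq_mul]
      have h1 : g.coeff (LMon g) = 1 := (hmonic g hgG).2
      rw [h1, mul_one]
  -- the D submodules
  have hDmul : ∀ N (a x : FreeAlg R n),
      (∀ w, ¬(∃ v ∈ LMset G, MDvd v w) → x.coeff w ∈ E N w) →
      ∀ w, ¬(∃ v ∈ LMset G, MDvd v w) → (a * x).coeff w ∈ E N w := by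
    intro N a x hx w hw
    rw [MonoidAlgebra.coeff_mul, Finsupp.sum]
    refine Finset.sum_induction _ (fun c => c ∈ E N w) (fun a b => hEadd N w a b) (hE0 N w) ?_
    intro a₁ ha₁
    rw [Finsupp.sum]
    refine Finset.sum_induction _ (fun c => c ∈ E N w) (fun a b => hEadd N w a b) (hE0 N w) ?_
    intro a₂ ha₂
    by_cases he : a₁ * a₂ = w
    · rw [if_pos he]
      have hnd : ¬(∃ v ∈ LMset G, MDvd v a₂) := by
        rintro ⟨v, hv, p, s, rfl⟩
        exact hw ⟨v, hv, a₁ * p, s, by rw [← he]; simp only [mul_assoc]⟩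
      have h2 := hEscale N (a.coeff a₁) a₁ a₂ _ (hx a₂ hnd)
      rwa [he] at h2
    · rw [if_neg he]; exact hE0 N w
  let D : Submodule (QuotRing I) (QuotRing I) → Submodule (FreeAlg R n) (FreeAlg R n) :=
    fun N =>
    { carrier := {x | ∀ w, ¬(∃ v ∈ LMset G, MDvd v w) → x.coeff w ∈ E N w}
      add_mem' := fun {x y} hx hy w hw => by
        rw [MonoidAlgebra.coeff_add, Finsupp.add_apply]; exact hEadd N w _ _ (hx w hw) (hy w hw)
      zero_mem' := fun w hw => hE0 N w
      smul_mem' := fun a {x} hx => hDmul N a x hx }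
  -- the lattice maps
  let LT : Submodule (QuotRing I) (QuotRing I) → Set (FreeAlg R n) := fun N =>
    {x | ∃ f : FreeAlg R n, π f ∈ N ∧ f ≠ 0 ∧ x = MonoidAlgebra.single (LMon f) (f.coeff (LMon f))}
  let Φ : Submodule (QuotRing I) (QuotRing I) → Submodule (FreeAlg R n) (FreeAlg R n) :=
    fun N => TwoSidedIdeal.asIdeal J ⊔ Submodule.span (FreeAlg R n) (LT N)
  let θ : Submodule (QuotRing I) (QuotRing I) → Submodule (QuotRing J) (QuotRing J) :=
    fun N => Submodule.map ρsl (Φ N)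
  have hθ : ∀ N₁ N₂ : Submodule (QuotRing I) (QuotRing I), N₁ < N₂ → θ N₁ < θ N₂ := by
    intro N₁ N₂ hlt
    have hle : Φ N₁ ≤ Φ N₂ := by
      refine sup_le_sup_left (Submodule.span_mono ?_) _
      rintro x ⟨f, hf, h2, h3⟩
      exact ⟨f, hlt.le hf, h2, h3⟩
    obtain ⟨q0, hq2, hq1⟩ := SetLike.exists_of_lt hlt
    obtain ⟨f1, rfl⟩ : ∃ f, π f = q0 := Quotient.inductionOn' q0 fun a => ⟨a, rfl⟩
    let T : Set (FreeAlg R n) := {f | π f ∈ N₂ ∧ π f ∉ N₁}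
    have hTne : (LMon '' T).Nonempty := ⟨_, ⟨f1, ⟨hq2, hq1⟩, rfl⟩⟩
    have hwf := hord.1.wf
    obtain ⟨f₀, hf₀T, hf₀w⟩ := hwf.min_mem (LMon '' T) hTne
    have hf₀ne : f₀ ≠ 0 := fun h => hf₀T.2 (by rw [h, map_zero]; exact N₁.zero_mem)
    have hmain : MonoidAlgebra.single (LMon f₀) (f₀.coeff (LMon f₀)) ∉ Φ N₁ := by
      intro hmem
      have hcE : f₀.coeff (LMon f₀) ∈ E N₁ (LMon f₀) := by
        by_cases hdiv : ∃ v ∈ LMset G, MDvd v (LMon f₀)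
        · exact hDiv N₁ _ hdiv _
        · have hsub : Φ N₁ ≤ D N₁ := by
            refine sup_le ?_ (Submodule.span_le.mpr ?_)
            · intro x hx w hw
              have hx' : x ∈ J := TwoSidedIdeal.mem_asIdeal.mp hx
              have hx0 : x.coeff w = 0 := by
                by_contra h0
                exact hw (mdvd_of_mem_monomial_span hx' h0)
              rw [hx0]; exact hE0 N₁ w
            · rintro x ⟨f, hfN, hfne, rfl⟩ t ht
              rw [MonoidAlgebra.coeff_single, Finsupp.single_apply]
              by_cases he : LMon f = t
              · rw [if_pos he]
                exact ⟨f, hfN, fun u hu => he ▸ le_lmon hfne hu, he ▸ rfl⟩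
              · rw [if_neg he]; exact hE0 N₁ t
          have hD := hsub hmem (LMon f₀) hdiv
          rwa [MonoidAlgebra.coeff_single, Finsupp.single_apply, if_pos rfl] at hD
      obtain ⟨h, hhN, hhs, hhw⟩ := hcE
      have h1 : π (f₀ - h) ∈ N₂ := by
        rw [map_sub]; exact N₂.sub_mem hf₀T.1 (hlt.le hhN)
      have h2 : π (f₀ - h) ∉ N₁ := by
        intro hc
        apply hf₀T.2
        have he : π f₀ = π (f₀ - h) + π h := by rw [← map_add, sub_add_cancel]
        rw [he]; exact N₁.add_mem hc hhN
      have h3 : f₀ - h ≠ 0 := fun hc => h2 (by rw [hc, map_zero]; exact N₁.zero_mem)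
      have h4 : LMon (f₀ - h) < LMon f₀ := by
        have hne : LMon (f₀ - h) ≠ LMon f₀ := by
          intro he
          have hc := lcoef_ne_zero h3
          rw [he, MonoidAlgebra.coeff_sub, Finsupp.sub_apply, hhw, sub_self] at hc
          exact hc rfl
        have hle' : LMon (f₀ - h) ≤ LMon f₀ := by
          have hm := lmon_mem_support h3
          rw [Finsupp.mem_support_iff, MonoidAlgebra.coeff_sub, Finsupp.sub_apply] at hm
          rcases ne_or_eq (f₀.coeff (LMon (f₀ - h))) 0 with h' | h'
          · exact le_lmon hf₀ne (Finsupp.mem_support_iff.mpr h')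
          · refine hhs _ (Finsupp.mem_support_iff.mpr ?_)
            intro h''
            rw [h', h'', sub_zero] at hm
            exact hm rfl
        exact hle'.lt_of_ne hne
      exact hwf.not_lt_min (LMon '' T) ⟨f₀ - h, ⟨h1, h2⟩, rfl⟩ (hf₀w ▸ h4)
    refine lt_of_le_of_ne (Submodule.map_mono hle) ?_
    intro heq
    have hin : ρsl (MonoidAlgebra.single (LMon f₀) (f₀.coeff (LMon f₀))) ∈ θ N₂ :=
      Submodule.mem_map_of_mem
        ((le_sup_right : _ ≤ Φ N₂) (Submodule.subset_span ⟨f₀, hf₀T.1, hf₀ne, rfl⟩))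
    rw [← heq] at hin
    obtain ⟨y, hyΦ, hyeq⟩ := hin
    apply hmain
    have hdiff : MonoidAlgebra.single (LMon f₀) (f₀.coeff (LMon f₀)) - y ∈ J := by
      rw [← TwoSidedIdeal.rel_iff]
      exact (RingCon.eq (c := J.ringCon)).mp
        (show ((MonoidAlgebra.single (LMon f₀) (f₀.coeff (LMon f₀)) : FreeAlg R n) : J.ringCon.Quotient)
          = (y : J.ringCon.Quotient) from hyeq.symm)
    have hdm : MonoidAlgebra.single (LMon f₀) (f₀.coeff (LMon f₀)) - y ∈ Φ N₁ :=
      (le_sup_left : TwoSidedIdeal.asIdeal J ≤ Φ N₁) (TwoSidedIdeal.mem_asIdeal.mpr hdiff)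
    have hsum := (Φ N₁).add_mem hdm hyΦ
    rwa [sub_add_cancel] at hsum
  refine ⟨Subrelation.wf (fun {N₁ N₂} h => hθ N₁ N₂ h) (InvImage.wf θ hA.wf)⟩

end Master
section LHpart
variable [LinearOrder (Word n)]

lemma LH_apply (d : Fin n → ℕ) (f : FreeAlg R n) (w : Word n) :
    (LH d f).coeff w = if wdeg d w = maxdeg d f then f.coeff w else 0 := by
  rw [LH, MonoidAlgebra.coeff_sum, Finsupp.finset_sum_apply]
  simp only [MonoidAlgebra.coeff_single, Finsupp.single_apply]
  rw [Finset.sum_ite_eq' (f.coeff.support.filter fun u => wdeg d u = maxdeg d f) w (fun u => f.coeff u)]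
  by_cases h : wdeg d w = maxdeg d f
  · rw [if_pos h]
    by_cases hs : w ∈ f.coeff.support
    · rw [if_pos (Finset.mem_filter.mpr ⟨hs, h⟩)]
    · rw [if_neg (show ¬(w ∈ f.coeff.support.filter fun u => wdeg d u = maxdeg d f)
        from fun hc => hs (Finset.mem_filter.mp hc).1), Finsupp.notMem_support_iff.mp hs]
  · rw [if_neg h, if_neg (show ¬(w ∈ f.coeff.support.filter fun u => wdeg d u = maxdeg d f)
      from fun hc => h (Finset.mem_filter.mp hc).2)]

lemma wdeg_lmon (d : Fin n → ℕ) (hord : IsGradedMonomialOrder d) {f : FreeAlg R n}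
    (hf : f ≠ 0) : wdeg d (LMon f) = maxdeg d f := by
  obtain ⟨u, hu, hequ⟩ :=
    Finset.exists_mem_eq_sup f.coeff.support
      (Finsupp.support_nonempty_iff.mpr (fun h' => hf (MonoidAlgebra.coeff_eq_zero.mp h'))) (wdeg d)
  refine le_antisymm (Finset.le_sup (lmon_mem_support hf)) ?_
  rw [maxdeg, hequ]
  by_contra hlt
  push_neg at hlt
  exact absurd (hord.2 _ _ hlt) (not_lt.mpr (le_lmon hf hu))

lemma LH_apply_lmon (d : Fin n → ℕ) (hord : IsGradedMonomialOrder d) {f : FreeAlg R n}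
    (hf : f ≠ 0) : (LH d f).coeff (LMon f) = f.coeff (LMon f) := by
  rw [LH_apply, if_pos (wdeg_lmon d hord hf)]

lemma LH_ne_zero (d : Fin n → ℕ) (hord : IsGradedMonomialOrder d) {f : FreeAlg R n}
    (hf : f ≠ 0) : LH d f ≠ 0 := by
  intro h
  apply lcoef_ne_zero hf
  rw [← LH_apply_lmon d hord hf, h]
  simp

lemma lmon_LH (d : Fin n → ℕ) (hord : IsGradedMonomialOrder d) {f : FreeAlg R n}
    (hf : f ≠ 0) : LMon (LH d f) = LMon f := by
  apply lmon_eq_of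
  · rw [LH_apply_lmon d hord hf]; exact lcoef_ne_zero hf
  · intro u hu
    rw [Finsupp.mem_support_iff, LH_apply] at hu
    have hfu : f.coeff u ≠ 0 := by
      by_cases h : wdeg d u = maxdeg d f
      · rwa [if_pos h] at hu
      · rw [if_neg h] at hu; exact absurd rfl hu
    exact le_lmon hf (Finsupp.mem_support_iff.mpr hfu)

end LHpart
/-- If `G` is a monic Gröbner basis of `I = ⟨G⟩` with respect to an
ℕ-graded monomial ordering and the monomial algebra `R⟨X⟩/⟨LM(G)⟩` is left Artinian, then so are
`R⟨X⟩/⟨LH(G)⟩` and `A = R⟨X⟩/I`. -/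
theorem artinian_lifts [LinearOrder (Word n)]
    (d : Fin n → ℕ) (hd : ∀ i, 0 < d i) (hord : IsGradedMonomialOrder d)
    (G : Set (FreeAlg R n)) (hGB : IsMonicGB G (TwoSidedIdeal.span G))
    (hA : IsArtinianRing (QuotRing (TwoSidedIdeal.span (mono R '' LMset G)))) :
    IsArtinianRing (QuotRing (TwoSidedIdeal.span (LHset d G))) ∧
    IsArtinianRing (QuotRing (TwoSidedIdeal.span G)) := by
  constructor
  · have hmon : ∀ x ∈ LHset d G, IsMonic x := by
      rintro x ⟨g, hgG, hgne, rfl⟩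
      refine ⟨LH_ne_zero d hord hgne, ?_⟩
      show (LH d g).coeff (LMon (LH d g)) = 1
      rw [lmon_LH d hord hgne, LH_apply_lmon d hord hgne]
      exact (hGB.1 g hgG).2
    have hset : LMset (LHset d G) = LMset G := by
      ext w
      constructor
      · rintro ⟨x, ⟨g, hgG, hgne, rfl⟩, hxne, rfl⟩
        exact ⟨g, hgG, hgne, (lmon_LH d hord hgne).symm⟩
      · rintro ⟨g, hgG, hgne, rfl⟩
        exact ⟨LH d g, ⟨g, hgG, hgne, rfl⟩, LH_ne_zero d hord hgne, lmon_LH d hord hgne⟩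
    have hA' : IsArtinianRing (QuotRing (TwoSidedIdeal.span (mono R '' LMset (LHset d G)))) := by
      rw [hset]; exact hA
    exact master hord.1 (LHset d G) hmon hA'
  · exact master hord.1 G hGB.1 hA
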